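/- A 2×2 complex unitary matrix U with det U = 1 has both diagonal entries equal and real (i.e., U₁₁ = U₂₂ ∈ ℝ) if and only if there exist a, b ∈ ℝ such that U = exp(i·(a·σ_x + b·σ_y)), where exp is the matrix exponential; that is, U is a rotation about an axis in the XY-plane of the Bloch sphere. -/

import Mathlib

open Matrix

/-- The Pauli matrix σ_x. -/
def pauliX : Matrix (Fin 2) (Fin 2) ℂ := !![0, 1; 1, 0]

/-- The Pauli matrix σ_y. -/
def pauliY : Matrix (Fin 2) (Fin 2) ℂ := !![0, -Complex.I; Complex.I, 0]

open Complex in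
lemma exp_xy (a b : ℝ) (hab : ¬(a = 0 ∧ b = 0)) :
    NormedSpace.exp (Complex.I • ((a : ℂ) • pauliX + (b : ℂ) • pauliY)) =
      !![(Real.cos (Real.sqrt (a^2 + b^2)) : ℂ),
         ((b : ℂ) + a * I) * (Real.sin (Real.sqrt (a^2 + b^2)) / Real.sqrt (a^2 + b^2));
         (-(b : ℂ) + a * I) * (Real.sin (Real.sqrt (a^2 + b^2)) / Real.sqrt (a^2 + b^2)),
         (Real.cos (Real.sqrt (a^2 + b^2)) : ℂ)] := by
  set r : ℝ := Real.sqrt (a^2 + b^2) with hrdef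
  have hr2 : (r : ℝ)^2 = a^2 + b^2 := Real.sq_sqrt (by positivity)
  have hrpos : 0 < r := by
    rcases not_and_or.mp hab with h | h
    · exact Real.sqrt_pos.mpr (by positivity)
    · exact Real.sqrt_pos.mpr (by positivity)
  have hrne : (r : ℂ) ≠ 0 := by exact_mod_cast hrpos.ne'
  set c : ℂ := a + b * I with hc
  set cb : ℂ := a - b * I with hcb
  have hccb : c * cb = (r : ℂ)^2 := by
    have h1 : c * cb = ((a:ℂ)^2 + (b:ℂ)^2) := by
      rw [hc, hcb]; ring_nf; rw [Complex.I_sq]; ring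
    rw [h1]
    exact_mod_cast congrArg (Complex.ofReal) hr2.symm
  have hcbne : cb ≠ 0 := by
    intro h; rw [h, mul_zero] at hccb
    exact (pow_ne_zero 2 hrne) hccb.symm
  set P : Matrix (Fin 2) (Fin 2) ℂ := !![cb, cb; (r : ℂ), -(r:ℂ)] with hP
  have hdetP : IsUnit P.det := by
    have : P.det = -2 * r * cb := by simp [hP, Matrix.det_fin_two_of]; ring
    rw [this, isUnit_iff_ne_zero]
    simp [hrne, hcbne]
  have hPunit : IsUnit P := (Matrix.isUnit_iff_isUnit_det P).mpr hdetP
  have cancel : ∀ X : Matrix (Fin 2) (Fin 2) ℂ, X * P * P⁻¹ = X :=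
    fun X => Matrix.mul_nonsing_inv_cancel_right P X hdetP
  set D : Matrix (Fin 2) (Fin 2) ℂ := Matrix.diagonal ![I * r, -(I * r)] with hD
  have hM : Complex.I • ((a : ℂ) • pauliX + (b : ℂ) • pauliY) = P * D * P⁻¹ := by
    have key : Complex.I • ((a : ℂ) • pauliX + (b : ℂ) • pauliY) * P = P * D := by
      ext i j
      fin_cases i <;> fin_cases j <;>
        simp [pauliX, pauliY, hP, hD, Matrix.mul_apply, Fin.sum_univ_two,
          Matrix.diagonal, Matrix.smul_apply] <;> ring_nf
      · linear_combination
      · linear_combination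
      · rw [hcb]; simp only [hc, hcb] at hccb; linear_combination I * hccb
      · rw [hcb]; simp only [hc, hcb] at hccb; linear_combination I * hccb
    calc Complex.I • ((a : ℂ) • pauliX + (b : ℂ) • pauliY)
        = Complex.I • ((a : ℂ) • pauliX + (b : ℂ) • pauliY) * P * P⁻¹ := (cancel _).symm
      _ = P * D * P⁻¹ := by rw [key]
  rw [hM, Matrix.exp_conj _ _ hPunit, Matrix.exp_diagonal]
  have hE : NormedSpace.exp ![I * (r:ℂ), -(I * r)] = ![Complex.exp (I * r), Complex.exp (-(I * r))] := by
    ext i; fin_cases i <;> simp [Pi.exp_def, Complex.exp_eq_exp_ℂ]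
  rw [hE]
  have hr2c : ((a:ℂ)^2 + (b:ℂ)^2) = (r:ℂ)^2 :=
    by exact_mod_cast congrArg (Complex.ofReal) hr2.symm
  have key2 : P * Matrix.diagonal ![Complex.exp (I * r), Complex.exp (-(I * r))] =
      !![(Real.cos r : ℂ), ((b : ℂ) + a * I) * (Real.sin r / r);
         (-(b : ℂ) + a * I) * (Real.sin r / r), (Real.cos r : ℂ)] * P := by
    have hexp1 : Complex.exp (I * r) = Complex.cos r + Complex.sin r * I := by
      rw [mul_comm]; exact Complex.exp_mul_I _
    have hexp2 : Complex.exp (-(I * r)) = Complex.cos r - Complex.sin r * I := by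
      have h := Complex.exp_mul_I (-(r:ℂ))
      rw [show -(I*(r:ℂ)) = -(r:ℂ)*I by ring, h, Complex.cos_neg, Complex.sin_neg]; ring
    ext i j
    fin_cases i <;> fin_cases j <;>
      simp [hP, Matrix.mul_apply, Fin.sum_univ_two, Matrix.diagonal, hexp1, hexp2] <;>
      field_simp
    · linear_combination (-(b:ℂ) * Complex.sin r) * Complex.I_sq
    · linear_combination ((b:ℂ) * Complex.sin r) * Complex.I_sq
    · linear_combination (Complex.sin (r:ℂ) * I) * hr2c.symm + (Complex.sin (r:ℂ) * b * a) * Complex.I_sq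
    · linear_combination (Complex.sin (r:ℂ) * I) * hr2c.symm + (Complex.sin (r:ℂ) * b * a) * Complex.I_sq
  calc P * Matrix.diagonal ![Complex.exp (I * r), Complex.exp (-(I * r))] * P⁻¹
      = !![(Real.cos r : ℂ), ((b : ℂ) + a * I) * (Real.sin r / r);
         (-(b : ℂ) + a * I) * (Real.sin r / r), (Real.cos r : ℂ)] * P * P⁻¹ := by rw [key2]
    _ = _ := cancel _


open Complex in
/-- A 2×2 unitary with determinant 1 has both diagonal entries
equal and real iff it is `exp(i(a·σ_x + b·σ_y))` for some real `a, b`, i.e. a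
rotation about an axis in the XY-plane of the Bloch sphere. -/
theorem unitary_equal_real_diag_iff_xy_rotation (U : Matrix (Fin 2) (Fin 2) ℂ)
    (hU : U ∈ Matrix.unitaryGroup (Fin 2) ℂ) (hdet : U.det = 1) :
    (U 0 0 = U 1 1 ∧ (U 0 0).im = 0) ↔
      ∃ a b : ℝ,
        U = NormedSpace.exp (Complex.I • ((a : ℂ) • pauliX + (b : ℂ) • pauliY)) := by
  constructor
  · rintro ⟨heq, him⟩
    -- star U = adjugate U
    have h1 : U * U.adjugate = 1 := by rw [Matrix.mul_adjugate, hdet, one_smul]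
    have h1' : U.adjugate * U = 1 := by rw [Matrix.adjugate_mul, hdet, one_smul]
    have h2 : U * star U = 1 := Matrix.mem_unitaryGroup_iff.mp hU
    have h3 : star U = U.adjugate := by
      calc star U = (U.adjugate * U) * star U := by rw [h1', one_mul]
        _ = U.adjugate * (U * star U) := by rw [mul_assoc]
        _ = U.adjugate := by rw [h2, mul_one]
    have hadj : U.adjugate = !![U 1 1, -U 0 1; -U 1 0, U 0 0] := Matrix.adjugate_fin_two U
    have e10 : (starRingEnd ℂ) (U 0 1) = - U 1 0 := by
      have := congrFun (congrFun h3 1) 0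
      simpa [Matrix.star_eq_conjTranspose, Matrix.conjTranspose_apply, hadj] using this
    set α : ℝ := (U 0 0).re with hαdef
    have hα : U 0 0 = (α : ℂ) := by
      apply Complex.ext <;> simp [him, hαdef]
    set β : ℂ := U 0 1 with hβdef
    have hU10 : U 1 0 = -(starRingEnd ℂ) β := by rw [e10, neg_neg]
    have hdet2 : (α : ℂ)^2 + (Complex.normSq β : ℂ) = 1 := by
      have := Matrix.det_fin_two U
      rw [hdet, ← heq, hα, hU10, ← hβdef] at this
      rw [← Complex.mul_conj]
      linear_combination -this
    have hnorm : α^2 + Complex.normSq β = 1 := by exact_mod_cast hdet2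
    by_cases hβ : β = 0
    · -- diagonal case: U = ±1
      rw [hβ, map_zero] at hnorm
      simp at hnorm
      have hU10' : U 1 0 = 0 := by rw [hU10, hβ, map_zero, neg_zero]
      rcases hnorm with h | h
      · refine ⟨0, 0, ?_⟩
        have : Complex.I • ((0 : ℂ) • pauliX + (0 : ℂ) • pauliY) = 0 := by simp
        rw [Complex.ofReal_zero, this, NormedSpace.exp_zero]
        rw [Matrix.eta_fin_two U, ← heq, hα, ← hβdef, hβ, hU10', Matrix.one_fin_two, h]
        norm_num
      · refine ⟨Real.pi, 0, ?_⟩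
        rw [exp_xy Real.pi 0 (by simp [Real.pi_ne_zero])]
        have hs : Real.sqrt (Real.pi^2 + 0^2) = Real.pi := by
          rw [show Real.pi^2 + 0^2 = Real.pi^2 by ring]
          exact Real.sqrt_sq Real.pi_pos.le
        rw [hs, Real.cos_pi, Real.sin_pi]
        rw [Matrix.eta_fin_two U, ← heq, hα, ← hβdef, hβ, hU10', h]
        norm_num
    · -- generic case
      set m : ℝ := ‖β‖ with hm
      have hmpos : 0 < m := norm_pos_iff.mpr hβ
      have hα1 : -1 ≤ α := by nlinarith [Complex.normSq_nonneg β]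
      have hα2 : α ≤ 1 := by nlinarith [Complex.normSq_nonneg β]
      set r0 : ℝ := Real.arccos α with hr0
      have hcos : Real.cos r0 = α := Real.cos_arccos hα1 hα2
      have hsin : Real.sin r0 = m := by
        rw [hr0, Real.sin_arccos, hm, show 1 - α^2 = Complex.normSq β by linarith]
        exact (Complex.norm_def _).symm
      have hr0pos : 0 < r0 := by
        rcases (Real.arccos_nonneg α).lt_or_eq with h | h
        · exact h
        · exfalso
          have : Real.sin r0 = 0 := by rw [hr0, ← h, Real.sin_zero]
          rw [hsin] at this; linarith
      refine ⟨r0 * β.im / m, r0 * β.re / m, ?_⟩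
      have hab : ¬(r0 * β.im / m = 0 ∧ r0 * β.re / m = 0) := by
        rintro ⟨ha, hb⟩
        apply hβ
        have him0 : β.im = 0 := by
          rw [div_eq_zero_iff] at ha
          rcases ha with h | h
          · rcases mul_eq_zero.mp h with h' | h'
            · exact absurd h' hr0pos.ne'
            · exact h'
          · exact absurd h hmpos.ne'
        have hre0 : β.re = 0 := by
          rw [div_eq_zero_iff] at hb
          rcases hb with h | h
          · rcases mul_eq_zero.mp h with h' | h'
            · exact absurd h' hr0pos.ne'
            · exact h'
          · exact absurd h hmpos.ne'
        exact Complex.ext hre0 him0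
      rw [exp_xy _ _ hab]
      have hsq : Real.sqrt ((r0 * β.im / m)^2 + (r0 * β.re / m)^2) = r0 := by
        have h1 : (r0 * β.im / m)^2 + (r0 * β.re / m)^2 = r0^2 := by
          have : β.im^2 + β.re^2 = m^2 := by
            rw [hm, Complex.sq_norm, Complex.normSq_apply]; ring
          field_simp
          nlinarith [this]
        rw [h1, Real.sqrt_sq hr0pos.le]
      rw [hsq, hcos, hsin]
      have hmne : (m : ℂ) ≠ 0 := by exact_mod_cast hmpos.ne'
      have hr0ne : (r0 : ℂ) ≠ 0 := by exact_mod_cast hr0pos.ne'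
      have hβeq : (β.re : ℂ) + β.im * Complex.I = β := Complex.re_add_im β
      have hconj : (starRingEnd ℂ) β = (β.re : ℂ) - β.im * Complex.I := by
        apply Complex.ext <;> simp
      have hkey : ((r0:ℂ)/m) * ((m:ℂ)/r0) = 1 := by field_simp
      have hB : (((r0 * β.re / m : ℝ) : ℂ) + ((r0 * β.im / m : ℝ) : ℂ) * Complex.I) * ((m:ℂ) / r0) = β := by
        push_cast
        calc (((r0:ℂ) * β.re / m) + ((r0:ℂ) * β.im / m) * Complex.I) * ((m:ℂ) / r0)
            = ((β.re:ℂ) + β.im * Complex.I) * (((r0:ℂ)/m) * ((m:ℂ)/r0)) := by ring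
          _ = β := by rw [hkey, mul_one, hβeq]
      have hC : (-((r0 * β.re / m : ℝ) : ℂ) + ((r0 * β.im / m : ℝ) : ℂ) * Complex.I) * ((m:ℂ) / r0) = -(starRingEnd ℂ) β := by
        push_cast
        calc (-((r0:ℂ) * β.re / m) + ((r0:ℂ) * β.im / m) * Complex.I) * ((m:ℂ) / r0)
            = -((β.re:ℂ) - β.im * Complex.I) * (((r0:ℂ)/m) * ((m:ℂ)/r0)) := by ring
          _ = -(starRingEnd ℂ) β := by rw [hkey, mul_one, hconj]
      rw [hB, hC, Matrix.eta_fin_two U, ← heq, hα, ← hβdef, hU10]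
  · rintro ⟨a, b, rfl⟩
    by_cases hab : a = 0 ∧ b = 0
    · obtain ⟨ha, hb⟩ := hab
      have : Complex.I • (((a:ℝ) : ℂ) • pauliX + ((b:ℝ) : ℂ) • pauliY) = 0 := by
        rw [ha, hb]; simp
      rw [this, NormedSpace.exp_zero]
      simp [Matrix.one_apply]
    · rw [exp_xy a b hab]
      refine ⟨by simp, by simp⟩
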